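/- Let N : ℕ → ℤ → ℝ satisfy the 1D discrete total-population recursion, and suppose the initial deviation is bounded: D := sup_{j∈ℤ} |N_j^0 − Λ/μ| < ∞. Set ρ = (1 + 2λr)/(1 + 2λr + φμ), so that 0 < ρ < 1. Then for all n ≥ 0 and all j ∈ ℤ, |N_j^n − Λ/μ| ≤ ρⁿ·D. In particular N_j^n → Λ/μ as n → ∞, uniformly in j. -/

import Mathlib

/-- For the 1D discrete total-population recursion with bounded initial
deviation `D = sup_j |N⁰_j − Λ/μ|` and `ρ = (1 + 2λr)/(1 + 2λr + φμ)`, one has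
`0 < ρ < 1` and `|Nⁿ_j − Λ/μ| ≤ ρⁿ·D` for all `n, j`; in particular `Nⁿ_j → Λ/μ`
uniformly in `j`. -/
theorem nsfd1d_total_population_geometric_convergence
    (Λ μ lam k φ h r : ℝ)
    (hΛ : 0 ≤ Λ) (hμ : 0 < μ) (hlam : 0 ≤ lam)
    (hk : 0 < k) (hφ : 0 < φ) (hh : 0 < h) (hr : r = φ / h ^ 2)
    (N : ℕ → ℤ → ℝ)
    (hN : ∀ n j, (N (n + 1) j - N n j) / φ =
      lam * (N n (j + 1) - 2 * N (n + 1) j + N n (j - 1)) / h ^ 2 + Λ - μ * N (n + 1) j)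
    (hbdd : BddAbove (Set.range fun j : ℤ => |N 0 j - Λ / μ|))
    (D : ℝ) (hD : D = ⨆ j : ℤ, |N 0 j - Λ / μ|)
    (ρ : ℝ) (hρ : ρ = (1 + 2 * lam * r) / (1 + 2 * lam * r + φ * μ)) :
    (0 < ρ ∧ ρ < 1)
    ∧ (∀ n j, |N n j - Λ / μ| ≤ ρ ^ n * D)
    ∧ TendstoUniformly (fun (n : ℕ) (j : ℤ) => N n j) (fun _ => Λ / μ) Filter.atTop := by
  have hrpos : 0 < r := by rw [hr]; positivity
  have hlr : 0 ≤ lam * r := mul_nonneg hlam hrpos.le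
  have hc0 : 0 < 1 + 2 * lam * r + φ * μ := by nlinarith
  have hρpos : 0 < ρ := by rw [hρ]; positivity
  have hρlt : ρ < 1 := by rw [hρ, div_lt_one hc0]; nlinarith
  have hD0 : 0 ≤ D := by
    rw [hD]; exact le_trans (abs_nonneg _) (le_ciSup hbdd 0)
  -- deviation recursion
  have hrec : ∀ n j, N (n + 1) j - Λ / μ =
      ((N n j - Λ / μ) + lam * r * ((N n (j - 1) - Λ / μ) + (N n (j + 1) - Λ / μ)))
        / (1 + 2 * lam * r + φ * μ) := by
    intro n j
    have h1 := hN n j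
    rw [eq_div_iff hc0.ne']
    subst hr
    field_simp at h1 ⊢
    linear_combination μ * h1
  have key : ∀ n j, |N n j - Λ / μ| ≤ ρ ^ n * D := by
    intro n
    induction n with
    | zero => intro j; simpa [hD] using le_ciSup hbdd j
    | succ n ih =>
      intro j
      rw [hrec n j, abs_div, abs_of_pos hc0]
      rw [div_le_iff₀ hc0]
      have h1 := ih j
      have h2 := ih (j - 1)
      have h3 := ih (j + 1)
      have habs : |(N n j - Λ / μ) + lam * r * ((N n (j - 1) - Λ / μ) + (N n (j + 1) - Λ / μ))|
          ≤ (1 + 2 * lam * r) * (ρ ^ n * D) := by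
        calc _ ≤ |N n j - Λ / μ| + lam * r * (|N n (j - 1) - Λ / μ| + |N n (j + 1) - Λ / μ|) := by
              refine (abs_add_le _ _).trans ?_
              gcongr
              rw [abs_mul, abs_of_nonneg hlr]
              gcongr
              exact abs_add_le _ _
          _ ≤ (1 + 2 * lam * r) * (ρ ^ n * D) := by nlinarith [abs_nonneg (N n j - Λ / μ)]
      refine habs.trans ?_
      have : ρ ^ (n + 1) * D * (1 + 2 * lam * r + φ * μ) = (1 + 2 * lam * r) * (ρ ^ n * D) := by
        rw [pow_succ, show ρ ^ n * ρ * D * (1 + 2 * lam * r + φ * μ) = ρ ^ n * D * (ρ * (1 + 2 * lam * r + φ * μ)) by ring, hρ, div_mul_cancel₀ _ hc0.ne']; ring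
      rw [this]
  refine ⟨⟨hρpos, hρlt⟩, key, ?_⟩
  rw [Metric.tendstoUniformly_iff]
  intro ε hε
  have htend : Filter.Tendsto (fun n : ℕ => ρ ^ n * D) Filter.atTop (nhds 0) := by
    simpa using (tendsto_pow_atTop_nhds_zero_of_lt_one hρpos.le hρlt).mul_const D
  filter_upwards [htend.eventually (gt_mem_nhds hε)] with n hn j
  rw [Real.dist_eq, abs_sub_comm]
  exact lt_of_le_of_lt (key n j) hn
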